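/- Let N ∈ ℕ, let W : ℝ^N → [0,∞) be continuous, fix a ∈ ℝ^N, and define φ : ℝ^N → [0,∞) by φ(u) := d_W(a, u). If φ is (Fréchet) differentiable at a point u ∈ ℝ^N, then its gradient satisfies |∇φ(u)| ≤ √(2·W(u)). -/

import Mathlib

open MeasureTheory

/-- The geodesic distance induced by a potential `W`:
`d_W(u,v) = inf { ∫₀¹ √(2 W(γ(t))) |γ'(t)| dt : γ ∈ C¹([0,1];ℝ^N), γ(0)=u, γ(1)=v }`. -/
noncomputable def geodDist {N : ℕ} (W : EuclideanSpace ℝ (Fin N) → ℝ)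
    (u v : EuclideanSpace ℝ (Fin N)) : ℝ :=
  sInf {r : ℝ | ∃ γ γ' : ℝ → EuclideanSpace ℝ (Fin N),
    (∀ t ∈ Set.Icc (0 : ℝ) 1, HasDerivAt γ (γ' t) t) ∧
    ContinuousOn γ' (Set.Icc (0 : ℝ) 1) ∧ γ 0 = u ∧ γ 1 = v ∧
    r = ∫ t in (0 : ℝ)..1, Real.sqrt (2 * W (γ t)) * ‖γ' t‖}

namespace GeodAux

open Set intervalIntegral

noncomputable def psi (s : ℝ) : ℝ := 3 * s ^ 2 - 2 * s ^ 3

noncomputable def psi' (s : ℝ) : ℝ := 6 * s * (1 - s)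

lemma psi_deriv (s : ℝ) : HasDerivAt psi (psi' s) s := by
  have h : HasDerivAt (fun s : ℝ => 3 * s ^ 2 - 2 * s ^ 3)
      (3 * ((2 : ℕ) * s ^ 1) - 2 * ((3 : ℕ) * s ^ 2)) s :=
    ((hasDerivAt_pow 2 s).const_mul 3).sub ((hasDerivAt_pow 3 s).const_mul 2)
  convert h using 1
  case e'_8 => rfl
  simp only [psi']
  push_cast
  ring

lemma psi'_nonneg {s : ℝ} (hs : s ∈ Icc (0:ℝ) 1) : 0 ≤ psi' s := by
  have h1 := hs.1; have h2 := hs.2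
  have h : 0 ≤ 6 * s * (1 - s) := by nlinarith
  simpa [psi'] using h

lemma psi_mem {s : ℝ} (hs : s ∈ Icc (0:ℝ) 1) : psi s ∈ Icc (0:ℝ) 1 := by
  have h1 := hs.1; have h2 := hs.2
  constructor
  · have h : 0 ≤ 3 * s ^ 2 - 2 * s ^ 3 := by nlinarith
    simpa [psi] using h
  · have h : 3 * s ^ 2 - 2 * s ^ 3 ≤ 1 := by
      nlinarith [mul_nonneg (sq_nonneg (1 - s)) (by linarith : (0:ℝ) ≤ 1 + 2*s)]
    simpa [psi] using h

lemma psi_continuous : Continuous psi := by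
  unfold psi; continuity

lemma psi'_continuous : Continuous psi' := by
  unfold psi'; continuity

variable {N : ℕ}

local notation "E" => EuclideanSpace ℝ (Fin N)

lemma geod_bddBelow (W : E → ℝ) (a u : E) :
    BddBelow {r : ℝ | ∃ γ γ' : ℝ → E,
      (∀ t ∈ Set.Icc (0 : ℝ) 1, HasDerivAt γ (γ' t) t) ∧
      ContinuousOn γ' (Set.Icc (0 : ℝ) 1) ∧ γ 0 = a ∧ γ 1 = u ∧
      r = ∫ t in (0 : ℝ)..1, Real.sqrt (2 * W (γ t)) * ‖γ' t‖} := by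
  refine ⟨0, ?_⟩
  rintro r ⟨γ, γ', _, _, _, _, rfl⟩
  exact intervalIntegral.integral_nonneg zero_le_one
    (fun t _ => mul_nonneg (Real.sqrt_nonneg _) (norm_nonneg _))

lemma geod_nonempty (W : E → ℝ) (a u : E) :
    Set.Nonempty {r : ℝ | ∃ γ γ' : ℝ → E,
      (∀ t ∈ Set.Icc (0 : ℝ) 1, HasDerivAt γ (γ' t) t) ∧
      ContinuousOn γ' (Set.Icc (0 : ℝ) 1) ∧ γ 0 = a ∧ γ 1 = u ∧
      r = ∫ t in (0 : ℝ)..1, Real.sqrt (2 * W (γ t)) * ‖γ' t‖} := by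
  refine ⟨_, fun t => a + t • (u - a), fun _ => u - a, ?_, continuousOn_const, ?_, ?_, rfl⟩
  · intro t _
    simpa using ((hasDerivAt_id t).smul_const (u - a)).const_add a
  · simp
  · simp

/-- Key estimate: one-sided "triangle inequality" bound using a straight segment. -/
lemma geod_key (W : E → ℝ) (hWc : Continuous W)
    (a u v : E) (C : ℝ)
    (hC : ∀ s ∈ Icc (0:ℝ) 1, Real.sqrt (2 * W (u + s • (v - u))) ≤ C) :
    geodDist W a v ≤ geodDist W a u + C * ‖v - u‖ := by
  have hC0 : 0 ≤ C := le_trans (Real.sqrt_nonneg _) (hC 0 ⟨le_refl _, zero_le_one⟩)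
  refine le_of_forall_pos_le_add fun ε hε => ?_
  obtain ⟨r, hrS, hrlt⟩ := Real.lt_sInf_add_pos (geod_nonempty W a u) hε
  obtain ⟨η, η', hηd, hηc, hη0, hη1, hre⟩ := hrS
  have hηcont : ContinuousOn η (Icc (0:ℝ) 1) :=
    fun t ht => (hηd t ht).continuousAt.continuousWithinAt
  -- the concatenated path
  set γ : ℝ → E := fun t =>
    if t ≤ 1/2 then η (psi (2*t)) else u + psi (2*t-1) • (v - u) with hγ_def
  set γ' : ℝ → E := fun t =>
    if t ≤ 1/2 then (2 * psi' (2*t)) • η' (psi (2*t))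
    else (2 * psi' (2*t-1)) • (v - u) with hγ'_def
  -- derivatives of the two pieces
  have hA : ∀ t : ℝ, t ∈ Icc (0:ℝ) (1/2) →
      HasDerivAt (fun t => η (psi (2*t))) ((2 * psi' (2*t)) • η' (psi (2*t))) t := by
    intro t ht
    have h2 : HasDerivAt (fun t : ℝ => 2*t) 2 t := by
      simpa using (hasDerivAt_id t).const_mul 2
    have hps : HasDerivAt (fun t : ℝ => psi (2*t)) (psi' (2*t) * 2) t :=
      (psi_deriv (2*t)).comp t h2
    have hmem : psi (2*t) ∈ Icc (0:ℝ) 1 :=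
      psi_mem ⟨by linarith [ht.1], by linarith [ht.2]⟩
    have h := (hηd _ hmem).scomp t hps
    simpa [mul_comm, Function.comp_def] using h
  have hB : ∀ t : ℝ,
      HasDerivAt (fun t => u + psi (2*t-1) • (v - u)) ((2 * psi' (2*t-1)) • (v - u)) t := by
    intro t
    have h2 : HasDerivAt (fun t : ℝ => 2*t-1) 2 t := by
      simpa using ((hasDerivAt_id t).const_mul 2).sub_const 1
    have hps : HasDerivAt (fun t : ℝ => psi (2*t-1)) (psi' (2*t-1) * 2) t :=
      by have := (psi_deriv (2*t-1)).comp t h2; exact this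
    have h := (hps.smul_const (v - u)).const_add u
    simpa [mul_comm] using h
  -- derivative of γ
  have hγd : ∀ t ∈ Icc (0:ℝ) 1, HasDerivAt γ (γ' t) t := by
    intro t ht
    rcases lt_trichotomy t (1/2) with h | h | h
    · have hev : γ =ᶠ[nhds t] fun t => η (psi (2*t)) := by
        filter_upwards [Iio_mem_nhds h] with x hx
        have hx' : x ≤ 1/2 := le_of_lt (Set.mem_Iio.mp hx)
        simp only [hγ_def]
        rw [if_pos hx']
      have hv : γ' t = (2 * psi' (2*t)) • η' (psi (2*t)) := by
        simp only [hγ'_def]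
        rw [if_pos (le_of_lt h)]
      rw [hv]
      exact (hA t ⟨ht.1, le_of_lt h⟩).congr_of_eventuallyEq hev
    · subst h
      have hval : γ' (1/2 : ℝ) = 0 := by
        simp only [hγ'_def]
        rw [if_pos le_rfl, show psi' (2 * (1/2 : ℝ)) = 0 by norm_num [psi'],
          mul_zero, zero_smul]
      rw [hval]
      have hL : HasDerivWithinAt γ 0 (Iic (1/2 : ℝ)) (1/2 : ℝ) := by
        have h1 := hA (1/2) ⟨by norm_num, le_refl _⟩
        have h0 : (2 * psi' (2 * (1/2 : ℝ))) • η' (psi (2 * (1/2 : ℝ))) = (0 : E) := by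
          rw [show psi' (2 * (1/2 : ℝ)) = 0 by norm_num [psi'], mul_zero, zero_smul]
        rw [h0] at h1
        refine h1.hasDerivWithinAt.congr (fun x hx => ?_)
          (by simp only [hγ_def]; rw [if_pos le_rfl])
        simp only [hγ_def]
        rw [if_pos (Set.mem_Iic.mp hx)]
      have hR : HasDerivWithinAt γ 0 (Ici (1/2 : ℝ)) (1/2 : ℝ) := by
        have h1 := hB (1/2 : ℝ)
        have h0 : (2 * psi' (2 * (1/2 : ℝ) - 1)) • (v - u) = (0 : E) := by
          rw [show psi' (2 * (1/2 : ℝ) - 1) = 0 by norm_num [psi'], mul_zero, zero_smul]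
        rw [h0] at h1
        have hmid : γ (1/2 : ℝ) = u + psi (2 * (1/2 : ℝ) - 1) • (v - u) := by
          simp only [hγ_def]
          rw [if_pos le_rfl, show psi (2 * (1/2 : ℝ)) = 1 by norm_num [psi], hη1,
            show psi (2 * (1/2 : ℝ) - 1) = 0 by norm_num [psi], zero_smul, add_zero]
        refine h1.hasDerivWithinAt.congr (fun x hx => ?_) hmid
        rcases eq_or_lt_of_le (Set.mem_Ici.mp hx) with hx' | hx'
        · rw [← hx']; exact hmid
        · simp only [hγ_def]
          rw [if_neg (not_le.mpr hx')]
      have hU := hL.union hR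
      rw [Iic_union_Ici] at hU
      exact hasDerivWithinAt_univ.mp hU
    · have hev : γ =ᶠ[nhds t] fun t => u + psi (2*t-1) • (v - u) := by
        filter_upwards [Ioi_mem_nhds h] with x hx
        have hx' : ¬ (x ≤ 1/2) := not_le.mpr (Set.mem_Ioi.mp hx)
        simp only [hγ_def]
        rw [if_neg hx']
      have hv : γ' t = (2 * psi' (2*t-1)) • (v - u) := by
        simp only [hγ'_def]
        rw [if_neg (not_le.mpr h)]
      rw [hv]
      exact (hB t).congr_of_eventuallyEq hev
  -- expressions for γ, γ' on the two halves
  have hγ'A : ∀ x ∈ Icc (0:ℝ) (1/2), γ' x = (2 * psi' (2*x)) • η' (psi (2*x)) := by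
    intro x hx
    simp only [hγ'_def]
    rw [if_pos hx.2]
  have hγ'B : ∀ x ∈ Icc (1/2 : ℝ) 1, γ' x = (2 * psi' (2*x-1)) • (v - u) := by
    intro x hx
    rcases eq_or_lt_of_le hx.1 with hx' | hx'
    · rw [← hx']
      simp only [hγ'_def]
      rw [if_pos le_rfl, show psi' (2 * (1/2 : ℝ)) = 0 by norm_num [psi'],
        show psi' (2 * (1/2 : ℝ) - 1) = 0 by norm_num [psi']]
      simp
    · simp only [hγ'_def]
      rw [if_neg (not_le.mpr hx')]
  have hγB : ∀ x ∈ Icc (1/2 : ℝ) 1, γ x = u + psi (2*x-1) • (v - u) := by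
    intro x hx
    rcases eq_or_lt_of_le hx.1 with hx' | hx'
    · rw [← hx']
      simp only [hγ_def]
      rw [if_pos le_rfl, show psi (2 * (1/2 : ℝ)) = 1 by norm_num [psi], hη1,
        show psi (2 * (1/2 : ℝ) - 1) = 0 by norm_num [psi], zero_smul, add_zero]
    · simp only [hγ_def]
      rw [if_neg (not_le.mpr hx')]
  -- continuity of γ'
  have hcA : ContinuousOn γ' (Icc (0:ℝ) (1/2)) := by
    have hmaps : MapsTo (fun t : ℝ => psi (2*t)) (Icc (0:ℝ) (1/2)) (Icc (0:ℝ) 1) := by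
      intro x hx
      exact psi_mem ⟨by linarith [hx.1], by linarith [hx.2]⟩
    have h : ContinuousOn (fun x : ℝ => (2 * psi' (2*x)) • η' (psi (2*x)))
        (Icc (0:ℝ) (1/2)) := by
      refine ContinuousOn.fun_smul ?_ ?_
      · exact (continuous_const.mul (psi'_continuous.comp (continuous_const.mul continuous_id))).continuousOn
      · exact hηc.comp
          ((psi_continuous.comp (continuous_const.mul continuous_id)).continuousOn) hmaps
    exact h.congr hγ'A
  have hcB : ContinuousOn γ' (Icc (1/2 : ℝ) 1) := by
    have h : ContinuousOn (fun x : ℝ => (2 * psi' (2*x-1)) • (v - u)) (Icc (1/2 : ℝ) 1) := by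
      refine ContinuousOn.fun_smul ?_ continuousOn_const
      exact (continuous_const.mul (psi'_continuous.comp
        ((continuous_const.mul continuous_id).sub continuous_const))).continuousOn
    exact h.congr hγ'B
  have hγ'c : ContinuousOn γ' (Icc (0:ℝ) 1) := by
    have huni : Icc (0:ℝ) (1/2) ∪ Icc (1/2 : ℝ) 1 = Icc (0:ℝ) 1 :=
      Icc_union_Icc_eq_Icc (by norm_num) (by norm_num)
    intro t ht
    rcases lt_trichotomy t (1/2) with h | h | h
    · refine (hcA.continuousWithinAt ⟨ht.1, le_of_lt h⟩).mono_of_mem_nhdsWithin ?_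
      rw [mem_nhdsWithin_iff_exists_mem_nhds_inter]
      exact ⟨Iio (1/2 : ℝ), Iio_mem_nhds h, fun x hx => ⟨hx.2.1, le_of_lt hx.1⟩⟩
    · subst h
      have h2 := (hcA.continuousWithinAt ⟨by norm_num, le_refl _⟩).union
        (hcB.continuousWithinAt ⟨le_refl _, by norm_num⟩)
      rwa [huni] at h2
    · refine (hcB.continuousWithinAt ⟨le_of_lt h, ht.2⟩).mono_of_mem_nhdsWithin ?_
      rw [mem_nhdsWithin_iff_exists_mem_nhds_inter]
      exact ⟨Ioi (1/2 : ℝ), Ioi_mem_nhds h, fun x hx => ⟨le_of_lt hx.1, hx.2.2⟩⟩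
  have hγcont : ContinuousOn γ (Icc (0:ℝ) 1) :=
    fun t ht => (hγd t ht).continuousAt.continuousWithinAt
  -- the integrand
  set f : ℝ → ℝ := fun t => Real.sqrt (2 * W (γ t)) * ‖γ' t‖ with hf_def
  have hfc : ContinuousOn f (Icc (0:ℝ) 1) := by
    refine ContinuousOn.mul ?_ hγ'c.norm
    exact (Real.continuous_sqrt.comp (continuous_const.mul hWc)).comp_continuousOn hγcont
  have hint1 : IntervalIntegrable f volume 0 (1/2 : ℝ) := by
    apply ContinuousOn.intervalIntegrable
    rw [Set.uIcc_of_le (by norm_num : (0:ℝ) ≤ 1/2)]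
    exact hfc.mono (Icc_subset_Icc le_rfl (by norm_num))
  have hint2 : IntervalIntegrable f volume (1/2 : ℝ) 1 := by
    apply ContinuousOn.intervalIntegrable
    rw [Set.uIcc_of_le (by norm_num : (1/2:ℝ) ≤ 1)]
    exact hfc.mono (Icc_subset_Icc (by norm_num) le_rfl)
  -- piece 1 equals the cost of η
  have hpiece1 : (∫ t in (0:ℝ)..(1/2), f t) = r := by
    set F : ℝ → ℝ := fun s => Real.sqrt (2 * W (η s)) * ‖η' s‖ with hF_def
    have hFc : ContinuousOn F (Icc (0:ℝ) 1) := by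
      refine ContinuousOn.mul ?_ hηc.norm
      exact (Real.continuous_sqrt.comp (continuous_const.mul hWc)).comp_continuousOn hηcont
    have heq : ∀ t ∈ uIcc (0:ℝ) (1/2), f t =
        (fun t => 2 * psi' (2*t)) t • (F ∘ fun t => psi (2*t)) t := by
      intro t ht
      rw [Set.uIcc_of_le (by norm_num : (0:ℝ) ≤ 1/2)] at ht
      have h1 : γ t = η (psi (2*t)) := by
        simp only [hγ_def]
        rw [if_pos ht.2]
      have h2 : γ' t = (2 * psi' (2*t)) • η' (psi (2*t)) := hγ'A t ht
      have hnn : 0 ≤ 2 * psi' (2*t) :=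
        mul_nonneg (by norm_num) (psi'_nonneg ⟨by linarith [ht.1], by linarith [ht.2]⟩)
      simp only [hf_def, h1, h2, norm_smul, Real.norm_eq_abs, abs_of_nonneg hnn,
        Function.comp, hF_def, smul_eq_mul]
      ring
    rw [intervalIntegral.integral_congr heq]
    have hσc : ContinuousOn (fun t : ℝ => psi (2*t)) (uIcc (0:ℝ) (1/2)) :=
      (psi_continuous.comp (continuous_const.mul continuous_id)).continuousOn
    have hσd : ∀ x ∈ Set.Ioo (min (0:ℝ) (1/2)) (max (0:ℝ) (1/2)),
        HasDerivWithinAt (fun t : ℝ => psi (2*t)) ((fun t => 2 * psi' (2*t)) x)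
          (Set.Ioi x) x := by
      intro x _
      have h2 : HasDerivAt (fun t : ℝ => 2*t) 2 x := by
        simpa using (hasDerivAt_id x).const_mul 2
      have h := (psi_deriv (2*x)).comp x h2
      rw [mul_comm (psi' (2*x)) 2] at h
      exact h.hasDerivWithinAt
    have hσ'c : ContinuousOn (fun t : ℝ => 2 * psi' (2*t)) (uIcc (0:ℝ) (1/2)) :=
      (continuous_const.mul (psi'_continuous.comp (continuous_const.mul continuous_id))).continuousOn
    have himg : ContinuousOn F ((fun t : ℝ => psi (2*t)) '' uIcc (0:ℝ) (1/2)) := by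
      refine hFc.mono ?_
      rintro s ⟨x, hx, rfl⟩
      rw [Set.uIcc_of_le (by norm_num : (0:ℝ) ≤ 1/2)] at hx
      exact psi_mem ⟨by linarith [hx.1], by linarith [hx.2]⟩
    rw [intervalIntegral.integral_comp_smul_deriv'' hσc hσd hσ'c himg]
    have hb0 : psi (2 * (0:ℝ)) = 0 := by norm_num [psi]
    have hb1 : psi (2 * (1/2:ℝ)) = 1 := by norm_num [psi]
    rw [hb0, hb1, hre]
  -- piece 2 equals the segment cost
  have hpiece2 : (∫ t in (1/2:ℝ)..1, f t) =
      ∫ s in (0:ℝ)..1, Real.sqrt (2 * W (u + s • (v - u))) * ‖v - u‖ := by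
    set G : ℝ → ℝ := fun s => Real.sqrt (2 * W (u + s • (v - u))) * ‖v - u‖ with hG_def
    have hGc : Continuous G := by
      refine Continuous.mul ?_ continuous_const
      exact Real.continuous_sqrt.comp (continuous_const.mul
        (hWc.comp (continuous_const.add (continuous_id.smul continuous_const))))
    have heq : ∀ t ∈ uIcc (1/2:ℝ) 1, f t =
        (fun t => 2 * psi' (2*t-1)) t • (G ∘ fun t => psi (2*t-1)) t := by
      intro t ht
      rw [Set.uIcc_of_le (by norm_num : (1/2:ℝ) ≤ 1)] at ht
      have h1 : γ t = u + psi (2*t-1) • (v - u) := hγB t ht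
      have h2 : γ' t = (2 * psi' (2*t-1)) • (v - u) := hγ'B t ht
      have hnn : 0 ≤ 2 * psi' (2*t-1) :=
        mul_nonneg (by norm_num) (psi'_nonneg ⟨by linarith [ht.1], by linarith [ht.2]⟩)
      simp only [hf_def, h1, h2, norm_smul, Real.norm_eq_abs, abs_of_nonneg hnn,
        Function.comp, hG_def, smul_eq_mul]
      ring
    rw [intervalIntegral.integral_congr heq]
    have hσc : ContinuousOn (fun t : ℝ => psi (2*t-1)) (uIcc (1/2:ℝ) 1) :=
      (psi_continuous.comp ((continuous_const.mul continuous_id).sub continuous_const)).continuousOn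
    have hσd : ∀ x ∈ Set.Ioo (min (1/2:ℝ) 1) (max (1/2:ℝ) 1),
        HasDerivWithinAt (fun t : ℝ => psi (2*t-1)) ((fun t => 2 * psi' (2*t-1)) x)
          (Set.Ioi x) x := by
      intro x _
      have h2 : HasDerivAt (fun t : ℝ => 2*t-1) 2 x := by
        simpa using ((hasDerivAt_id x).const_mul 2).sub_const 1
      have h := (psi_deriv (2*x-1)).comp x h2
      rw [mul_comm (psi' (2*x-1)) 2] at h
      exact h.hasDerivWithinAt
    have hσ'c : ContinuousOn (fun t : ℝ => 2 * psi' (2*t-1)) (uIcc (1/2:ℝ) 1) :=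
      (continuous_const.mul (psi'_continuous.comp
        ((continuous_const.mul continuous_id).sub continuous_const))).continuousOn
    rw [intervalIntegral.integral_comp_smul_deriv'' hσc hσd hσ'c hGc.continuousOn]
    have hb0 : psi (2 * (1/2:ℝ) - 1) = 0 := by norm_num [psi]
    have hb1 : psi (2 * (1:ℝ) - 1) = 1 := by norm_num [psi]
    rw [hb0, hb1]
  -- segment cost bound
  have hseg : (∫ s in (0:ℝ)..1, Real.sqrt (2 * W (u + s • (v - u))) * ‖v - u‖)
      ≤ C * ‖v - u‖ := by
    have hGc : Continuous fun s : ℝ => Real.sqrt (2 * W (u + s • (v - u))) * ‖v - u‖ := by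
      refine Continuous.mul ?_ continuous_const
      exact Real.continuous_sqrt.comp (continuous_const.mul
        (hWc.comp (continuous_const.add (continuous_id.smul continuous_const))))
    have h := intervalIntegral.integral_mono_on (by norm_num : (0:ℝ) ≤ 1)
      (hGc.intervalIntegrable (μ := volume) 0 1) (_root_.intervalIntegrable_const (c := C * ‖v - u‖))
      (fun s hs => mul_le_mul_of_nonneg_right (hC s hs) (norm_nonneg _))
    simpa using h
  -- membership of the concatenated path
  have hmem : (∫ t in (0:ℝ)..1, f t) ∈ {r : ℝ | ∃ γ γ' : ℝ → E,
      (∀ t ∈ Set.Icc (0 : ℝ) 1, HasDerivAt γ (γ' t) t) ∧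
      ContinuousOn γ' (Set.Icc (0 : ℝ) 1) ∧ γ 0 = a ∧ γ 1 = v ∧
      r = ∫ t in (0 : ℝ)..1, Real.sqrt (2 * W (γ t)) * ‖γ' t‖} := by
    refine ⟨γ, γ', hγd, hγ'c, ?_, ?_, rfl⟩
    · simp only [hγ_def]
      rw [if_pos (by norm_num : (0:ℝ) ≤ 1/2),
        show psi (2 * (0:ℝ)) = 0 by norm_num [psi], hη0]
    · simp only [hγ_def]
      rw [if_neg (by norm_num : ¬ ((1:ℝ) ≤ 1/2)),
        show psi (2 * (1:ℝ) - 1) = 1 by norm_num [psi], one_smul]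
      abel
  have hle : geodDist W a v ≤ ∫ t in (0:ℝ)..1, f t :=
    csInf_le (geod_bddBelow W a v) hmem
  have hsplit : (∫ t in (0:ℝ)..1, f t) =
      (∫ t in (0:ℝ)..(1/2), f t) + ∫ t in (1/2:ℝ)..1, f t :=
    (intervalIntegral.integral_add_adjacent_intervals hint1 hint2).symm
  have hfin : geodDist W a v ≤ r + C * ‖v - u‖ := by
    rw [hsplit, hpiece1, hpiece2] at hle
    linarith [hseg]
  have : r < geodDist W a u + ε := hrlt
  linarith

end GeodAux

/-- **Gradient bound for the geodesic distance function** `φ = d_W(a, ·)`: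
at every point of differentiability, `|∇φ(u)| ≤ √(2 W(u))`. -/
theorem norm_gradient_geodDistFun_le {N : ℕ}
    (W : EuclideanSpace ℝ (Fin N) → ℝ) (hWc : Continuous W) (hWnn : ∀ u, 0 ≤ W u)
    (a : EuclideanSpace ℝ (Fin N)) (φ : EuclideanSpace ℝ (Fin N) → ℝ)
    (hφ : ∀ u, φ u = geodDist W a u)
    (u : EuclideanSpace ℝ (Fin N)) (hdiff : DifferentiableAt ℝ φ u) :
    ‖gradient φ u‖ ≤ Real.sqrt (2 * W u) := by
  set g := gradient φ u with hg_def
  by_cases hg : g = 0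
  · rw [hg]
    simpa using Real.sqrt_nonneg (2 * W u)
  have hsq : Continuous fun w : EuclideanSpace ℝ (Fin N) => Real.sqrt (2 * W w) :=
    Real.continuous_sqrt.comp (continuous_const.mul hWc)
  refine le_of_forall_pos_le_add fun ε hε => ?_
  -- continuity modulus
  have hev : ∀ᶠ w in nhds u, Real.sqrt (2 * W w) < Real.sqrt (2 * W u) + ε :=
    hsq.continuousAt (Iio_mem_nhds (lt_add_of_pos_right _ hε))
  obtain ⟨δ, hδpos, hδ⟩ := Metric.eventually_nhds_iff.mp hev
  set e := ‖g‖⁻¹ • g with he_def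
  have hge : ‖e‖ = 1 := by
    rw [he_def, norm_smul, norm_inv, norm_norm,
      inv_mul_cancel₀ (norm_ne_zero_iff.mpr hg)]
  -- derivative of φ along the line t ↦ u + t • e at 0 is ‖g‖
  have hgrad : HasGradientAt φ g u := hdiff.hasGradientAt
  have hF : HasFDerivAt φ ((InnerProductSpace.toDual ℝ (EuclideanSpace ℝ (Fin N))) g) u :=
    hgrad.hasFDerivAt
  have hcline : HasDerivAt (fun t : ℝ => u + t • e) e 0 := by
    simpa using ((hasDerivAt_id (0:ℝ)).smul_const e).const_add u
  have h0 : u + (0:ℝ) • e = u := by simp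
  have hF2 : HasFDerivAt φ ((InnerProductSpace.toDual ℝ (EuclideanSpace ℝ (Fin N))) g)
      ((fun t : ℝ => u + t • e) 0) := by
    simpa [h0] using hF
  have hline : HasDerivAt (fun t : ℝ => φ (u + t • e))
      (((InnerProductSpace.toDual ℝ (EuclideanSpace ℝ (Fin N))) g) e) 0 :=
    hF2.comp_hasDerivAt 0 hcline
  have hval : ((InnerProductSpace.toDual ℝ (EuclideanSpace ℝ (Fin N))) g) e = ‖g‖ := by
    rw [InnerProductSpace.toDual_apply_apply, he_def, real_inner_smul_right,
      real_inner_self_eq_norm_sq]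
    have hne : ‖g‖ ≠ 0 := norm_ne_zero_iff.mpr hg
    field_simp
  rw [hval] at hline
  -- take limit of slopes from the right
  have htend : Filter.Tendsto (slope (fun t : ℝ => φ (u + t • e)) 0)
      (nhdsWithin 0 (Set.Ioi 0)) (nhds ‖g‖) :=
    (hasDerivAt_iff_tendsto_slope.mp hline).mono_left
      (nhdsWithin_mono 0 (fun x hx => ne_of_gt hx))
  refine le_of_tendsto htend ?_
  filter_upwards [Ioo_mem_nhdsGT_of_mem (Set.mem_Ico.mpr ⟨le_refl (0:ℝ), hδpos⟩)] with s hs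
  have hsp : (0:ℝ) < s := hs.1
  have hsd : s < δ := hs.2
  -- geodesic key bound for v = u + s • e
  have hC : ∀ σ ∈ Set.Icc (0:ℝ) 1,
      Real.sqrt (2 * W (u + σ • ((u + s • e) - u))) ≤ Real.sqrt (2 * W u) + ε := by
    intro σ hσ
    refine le_of_lt (hδ ?_)
    rw [dist_eq_norm, add_sub_cancel_left, add_sub_cancel_left, norm_smul, norm_smul,
      Real.norm_eq_abs, Real.norm_eq_abs, hge, mul_one,
      abs_of_nonneg hσ.1, abs_of_pos hsp]
    calc σ * s ≤ 1 * s := mul_le_mul_of_nonneg_right hσ.2 (le_of_lt hsp)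
    _ = s := one_mul s
    _ < δ := hsd
  have hkey := GeodAux.geod_key W hWc a u (u + s • e) (Real.sqrt (2 * W u) + ε) hC
  have hnorm : ‖(u + s • e) - u‖ = s := by
    rw [add_sub_cancel_left, norm_smul, Real.norm_eq_abs, hge, mul_one, abs_of_pos hsp]
  rw [hnorm, ← hφ, ← hφ] at hkey
  -- bound the slope
  rw [slope_def_field]
  have h00 : φ (u + (0:ℝ) • e) = φ u := by rw [h0]
  rw [sub_zero]
  have : (φ (u + s • e) - φ (u + (0:ℝ) • e)) / s ≤ Real.sqrt (2 * W u) + ε := by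
    rw [h00, div_le_iff₀ hsp]
    linarith [hkey]
  simpa using this
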